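/- Let η, θ ∈ ℝ with 0 < η and η > A₊², where A₊ = (1+η)cos(2θ)/2. Set A₋ = (1−η)cos(2θ)/2, B = √(η − A₊²), and φ = arccos(A₊/√η). Then for every natural number t, the t-th power of G_b(η,θ) = [[cos 2θ, η sin 2θ],[−sin 2θ, η cos 2θ]] equals ((√η)^t / B) · [[B cos(φt) + A₋ sin(φt), η sin(φt) sin 2θ],[−sin(φt) sin 2θ, B cos(φt) − A₋ sin(φt)]]. -/

import Mathlib

open Matrix Real

/-- The noisy Grover iteration with bit-flip noise of parameter `η`. -/
noncomputable def Gb (η θ : ℝ) : Matrix (Fin 2) (Fin 2) ℝ :=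
  !![Real.cos (2 * θ), η * Real.sin (2 * θ); -Real.sin (2 * θ), η * Real.cos (2 * θ)]

theorem Gb_pow (η θ : ℝ) (hη : 0 < η)
    (Ap Am B φ : ℝ)
    (hAp : Ap = (1 + η) * Real.cos (2 * θ) / 2)
    (hAm : Am = (1 - η) * Real.cos (2 * θ) / 2)
    (hB : B = Real.sqrt (η - Ap ^ 2))
    (hφ : φ = Real.arccos (Ap / Real.sqrt η))
    (h : Ap ^ 2 < η) (t : ℕ) :
    (Gb η θ) ^ t =
      ((Real.sqrt η) ^ t / B) •
        !![B * Real.cos (φ * t) + Am * Real.sin (φ * t),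
            η * Real.sin (φ * t) * Real.sin (2 * θ);
           -Real.sin (φ * t) * Real.sin (2 * θ),
            B * Real.cos (φ * t) - Am * Real.sin (φ * t)] := by
  have hs : (0:ℝ) < Real.sqrt η := Real.sqrt_pos.mpr hη
  have hB0 : 0 < B := hB ▸ Real.sqrt_pos.mpr (by linarith)
  have hB2 : B ^ 2 = η - Ap ^ 2 := by
    rw [hB]; exact Real.sq_sqrt (by linarith)
  have habs : |Ap / Real.sqrt η| ≤ 1 := by
    rw [abs_div, abs_of_pos hs, div_le_one hs]
    nlinarith [abs_nonneg Ap, sq_abs Ap, Real.sq_sqrt hη.le]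
  have hcos : Real.cos φ = Ap / Real.sqrt η := by
    rw [hφ, Real.cos_arccos (abs_le.mp habs).1 (abs_le.mp habs).2]
  have hsin : Real.sin φ = B / Real.sqrt η := by
    rw [hφ, Real.sin_arccos, hB,
      show 1 - (Ap / Real.sqrt η) ^ 2 = (η - Ap ^ 2) / η by field_simp; rw [Real.sq_sqrt hη.le]; ring,
      Real.sqrt_div (by linarith) η]
  have hpyth : Real.sin (2*θ) ^ 2 = 1 - Real.cos (2*θ) ^ 2 := by
    nlinarith [Real.sin_sq_add_cos_sq (2*θ)]
  subst hAp hAm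
  induction t with
  | zero =>
    ext i j
    fin_cases i <;> fin_cases j <;>
      simp [Gb, Matrix.one_apply, div_mul_cancel₀ _ hB0.ne', inv_mul_cancel₀ hB0.ne']
  | succ t ih =>
    have hca : Real.cos (φ * (t+1)) = Real.cos (φ * t) * (((1 + η) * Real.cos (2*θ) / 2) / Real.sqrt η)
        - Real.sin (φ * t) * (B / Real.sqrt η) := by
      rw [show φ * ((t:ℝ)+1) = φ * t + φ by ring, Real.cos_add, hcos, hsin]
    have hsa : Real.sin (φ * (t+1)) = Real.sin (φ * t) * (((1 + η) * Real.cos (2*θ) / 2) / Real.sqrt η)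
        + Real.cos (φ * t) * (B / Real.sqrt η) := by
      rw [show φ * ((t:ℝ)+1) = φ * t + φ by ring, Real.sin_add, hcos, hsin]
    have hca' : Real.sqrt η * Real.cos (φ * (t+1)) =
        Real.cos (φ * t) * ((1 + η) * Real.cos (2*θ) / 2) - Real.sin (φ * t) * B := by
      rw [hca]; field_simp
    have hsa' : Real.sqrt η * Real.sin (φ * (t+1)) =
        Real.sin (φ * t) * ((1 + η) * Real.cos (2*θ) / 2) + Real.cos (φ * t) * B := by
      rw [hsa]; field_simp
    rw [pow_succ, ih, Matrix.smul_mul, Gb, Matrix.mul_fin_two]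
    ext i j
    fin_cases i <;> fin_cases j <;>
      simp only [Matrix.smul_apply, Matrix.cons_val', Matrix.cons_val_zero, Matrix.cons_val_one,
        Matrix.head_cons, Matrix.head_fin_const, Matrix.empty_val', Matrix.cons_val_fin_one,
        smul_eq_mul, Nat.cast_succ, Fin.mk_zero, Fin.mk_one, Matrix.of_apply]
    · linear_combination (-(Real.sqrt η ^ t / B) * B) * hca'
        - ((Real.sqrt η ^ t / B) * ((1 - η) * Real.cos (2*θ) / 2)) * hsa'
        + ((Real.sqrt η ^ t / B) * Real.sin (φ * t)) * hB2
        - (η * (Real.sqrt η ^ t / B) * Real.sin (φ * t)) * hpyth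
    · linear_combination (-(Real.sqrt η ^ t / B) * η * Real.sin (2*θ)) * hsa'
    · linear_combination ((Real.sqrt η ^ t / B) * Real.sin (2*θ)) * hsa'
    · linear_combination (-(Real.sqrt η ^ t / B) * B) * hca'
        + ((Real.sqrt η ^ t / B) * ((1 - η) * Real.cos (2*θ) / 2)) * hsa'
        + ((Real.sqrt η ^ t / B) * Real.sin (φ * t)) * hB2
        - (η * (Real.sqrt η ^ t / B) * Real.sin (φ * t)) * hpyth
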